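/- In a finite network with disjoint nonempty vertex sets S and T, the extremal length of the family of paths from S to T equals the effective resistance between S and T: λ(S↔T;G) = R_eff(S↔T;G). -/
import Mathlib


open Finset

lemma duffin_telescope (m : ℕ) (f : Fin (m+1) → ℝ) :
    ∑ i : Fin m, (f i.succ - f i.castSucc) = f (Fin.last m) - f 0 := by
  induction m with
  | zero => simp
  | succ m ih =>
    rw [Fin.sum_univ_castSucc]
    have := ih (fun i => f i.castSucc)
    simp only [Fin.succ_castSucc] at this ⊢
    rw [this, Fin.succ_last]
    simp

lemma duffin_snoc_sum {V : Type*} (m : ℕ) (γ : Fin (m+1) → V) (z : V) (ρ : V → V → ℝ)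
    (γ' : Fin (m+2) → V) (hγ' : γ' = Fin.snoc γ z) :
    ∑ i : Fin (m+1), ρ (γ' i.castSucc) (γ' i.succ)
      = (∑ i : Fin m, ρ (γ i.castSucc) (γ i.succ)) + ρ (γ (Fin.last m)) z := by
  subst hγ'
  rw [Fin.sum_univ_castSucc]
  congr 1
  · apply Finset.sum_congr rfl
    intro i _
    rw [Fin.succ_castSucc, Fin.snoc_castSucc, Fin.snoc_castSucc]
  · rw [Fin.succ_last, Fin.snoc_last, Fin.snoc_castSucc]

lemma duffin_snoc_edges {V : Type*} (c : V → V → ℝ) (m : ℕ) (γ : Fin (m+1) → V) (z : V)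
    (γ' : Fin (m+2) → V) (hγ' : γ' = Fin.snoc γ z)
    (he : ∀ i : Fin m, 0 < c (γ i.castSucc) (γ i.succ)) (hz : 0 < c (γ (Fin.last m)) z) :
    ∀ i : Fin (m+1), 0 < c (γ' i.castSucc) (γ' i.succ) := by
  subst hγ'
  intro i
  induction i using Fin.lastCases with
  | last => rw [Fin.succ_last, Fin.snoc_last, Fin.snoc_castSucc]; exact hz
  | cast j => rw [Fin.succ_castSucc, Fin.snoc_castSucc, Fin.snoc_castSucc]; exact he j

lemma duffin_exists_path {V : Type*} (c : V → V → ℝ) (x y : V)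
    (hxy : Relation.ReflTransGen (fun u v => 0 < c u v) x y) :
    ∃ (m : ℕ) (γ : Fin (m+1) → V), γ 0 = x ∧ γ (Fin.last m) = y ∧
      ∀ i : Fin m, 0 < c (γ i.castSucc) (γ i.succ) := by
  induction hxy with
  | refl => exact ⟨0, fun _ => x, rfl, rfl, fun i => i.elim0⟩
  | @tail b z hab hbz ih =>
    obtain ⟨m, γ, h0, hl, he⟩ := ih
    refine ⟨m+1, Fin.snoc γ z, ?_, ?_, ?_⟩
    · rw [show (0 : Fin (m+2)) = Fin.castSucc 0 by rfl, Fin.snoc_castSucc]; exact h0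
    · rw [Fin.snoc_last]
    · exact duffin_snoc_edges c m γ z _ rfl he (hl ▸ hbz)

lemma duffin_parts {V : Type*} [Fintype V] (c : V → V → ℝ) (hsym : ∀ x y, c x y = c y x)
    (f u : V → ℝ) :
    ∑ x, ∑ y, c x y * (f y - f x) * (u y - u x)
      = -2 * ∑ x, u x * ∑ y, c x y * (f y - f x) := by
  have key : (∑ x, ∑ y, c x y * (f y - f x) * u y)
      = - ∑ x, ∑ y, c x y * (f y - f x) * u x := by
    rw [Finset.sum_comm, ← Finset.sum_neg_distrib]
    refine Finset.sum_congr rfl fun x _ => ?_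
    rw [← Finset.sum_neg_distrib]
    refine Finset.sum_congr rfl fun y _ => ?_
    rw [hsym y x]; ring
  have split : ∑ x, ∑ y, c x y * (f y - f x) * (u y - u x)
      = (∑ x, ∑ y, c x y * (f y - f x) * u y) - ∑ x, ∑ y, c x y * (f y - f x) * u x := by
    rw [← Finset.sum_sub_distrib]
    refine Finset.sum_congr rfl fun x _ => ?_
    rw [← Finset.sum_sub_distrib]
    exact Finset.sum_congr rfl fun y _ => by ring
  have rhs : ∑ x, u x * ∑ y, c x y * (f y - f x)
      = ∑ x, ∑ y, c x y * (f y - f x) * u x := by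
    refine Finset.sum_congr rfl fun x _ => ?_
    rw [Finset.mul_sum]
    exact Finset.sum_congr rfl fun y _ => by ring
  rw [split, key, rhs]; ring

lemma duffin_min_lip (a b : ℝ) : |min 1 a - min 1 b| ≤ |a - b| := by
  rcases le_total 1 a with ha | ha <;> rcases le_total 1 b with hb | hb
  · rw [min_eq_left ha, min_eq_left hb]; simp [abs_nonneg]
  · rw [min_eq_left ha, min_eq_right hb, abs_of_nonneg (by linarith)]
    calc (1:ℝ) - b ≤ a - b := by linarith
    _ ≤ |a - b| := le_abs_self _
  · rw [min_eq_right ha, min_eq_left hb, abs_of_nonpos (by linarith)]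
    calc -(a - 1) ≤ b - a := by linarith
    _ ≤ |a - b| := by rw [abs_sub_comm]; exact le_abs_self _
  · rw [min_eq_right ha, min_eq_right hb]

/-- Duffin's theorem: in a finite connected network with disjoint nonempty vertex
sets `S`, `T`, the extremal length of the family of paths from `S` to `T`
equals the effective resistance between `S` and `T` (expressed as
`1/strength(c d h)` for a voltage `h` that is `0` on `S`, `1` on `T`, and
harmonic elsewhere, which coincides with the resistance in the network obtained
by identifying `S` and `T` to single vertices). -/
theorem stmt_8 {V : Type*} [Fintype V]
    (c : V → V → ℝ) (hsym : ∀ x y, c x y = c y x) (hnn : ∀ x y, 0 ≤ c x y)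
    (hconn : ∀ x y : V, Relation.ReflTransGen (fun u v => 0 < c u v) x y)
    (S T : Finset V) (hS : S.Nonempty) (hT : T.Nonempty) (hdisj : Disjoint S T)
    (h : V → ℝ) (hS0 : ∀ s ∈ S, h s = 0) (hT1 : ∀ t ∈ T, h t = 1)
    (hharm : ∀ x, x ∉ S → x ∉ T → ∑ y, c x y * (h y - h x) = 0) :
    sSup {q : ℝ | ∃ ρ : V → V → ℝ, (∀ x y, ρ x y = ρ y x) ∧ (∀ x y, 0 ≤ ρ x y) ∧
        (∀ x y, c x y = 0 → ρ x y = 0) ∧ ρ ≠ 0 ∧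
        q = (sInf {l : ℝ | ∃ (m : ℕ) (γ : Fin (m+1) → V), γ 0 ∈ S ∧ γ (Fin.last m) ∈ T ∧
              (∀ i : Fin m, 0 < c (γ i.castSucc) (γ i.succ)) ∧
              l = ∑ i : Fin m, ρ (γ i.castSucc) (γ i.succ)}) ^ 2
            / ((1/2) * ∑ x, ∑ y, c x y * ρ x y ^ 2)}
      = 1 / (∑ s ∈ S, ∑ y, c s y * (h y - h s)) := by
  classical
  set F : V → ℝ := fun x => ∑ y, c x y * (h y - h x) with hF
  set I : ℝ := ∑ s ∈ S, F s with hI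
  -- Step A: energy of h equals 2 I
  have sumF : ∑ x, F x = 0 := by
    have key : (∑ x, ∑ y, c x y * (h y - h x))
        = - ∑ x, ∑ y, c x y * (h y - h x) := by
      nth_rewrite 1 [Finset.sum_comm]
      rw [← Finset.sum_neg_distrib]
      refine Finset.sum_congr rfl fun x _ => ?_
      rw [← Finset.sum_neg_distrib]
      refine Finset.sum_congr rfl fun y _ => ?_
      rw [hsym y x]; ring
    have : (2:ℝ) * ∑ x, ∑ y, c x y * (h y - h x) = 0 := by linarith
    simpa [hF] using by linarith [key]
  have sumTF : ∑ t ∈ T, F t = -I := by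
    have huniv : ∑ x, F x = ∑ x ∈ S ∪ T, F x := by
      symm
      apply Finset.sum_subset (Finset.subset_univ _)
      intro x _ hx
      simp only [Finset.mem_union, not_or] at hx
      exact hharm x hx.1 hx.2
    rw [Finset.sum_union hdisj] at huniv
    rw [huniv] at sumF
    linarith
  have hhF : ∑ x, h x * F x = -I := by
    have : ∑ x, h x * F x = ∑ x ∈ T, h x * F x := by
      symm
      apply Finset.sum_subset (Finset.subset_univ _)
      intro x _ hx
      by_cases hxS : x ∈ S
      · rw [hS0 x hxS]; ring
      · have hFx : F x = 0 := hharm x hxS hx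
        rw [hFx]; ring
    rw [this]
    rw [← sumTF]
    exact Finset.sum_congr rfl fun t ht => by rw [hT1 t ht]; ring
  have energy_h : ∑ x, ∑ y, c x y * (h y - h x)^2 = 2 * I := by
    have := duffin_parts c hsym h h
    rw [hhF] at this
    calc ∑ x, ∑ y, c x y * (h y - h x)^2
        = ∑ x, ∑ y, c x y * (h y - h x) * (h y - h x) :=
          Finset.sum_congr rfl fun x _ => Finset.sum_congr rfl fun y _ => by ring
      _ = -2 * -I := this
      _ = 2 * I := by ring
  -- Step B: Dirichlet principle
  have dirichlet : ∀ g : V → ℝ, (∀ s ∈ S, g s = 0) → (∀ t ∈ T, g t = 1) →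
      2 * I ≤ ∑ x, ∑ y, c x y * (g y - g x)^2 := by
    intro g hg0 hg1
    have cross : ∑ x, ∑ y, c x y * (h y - h x) * ((g y - h y) - (g x - h x)) = 0 := by
      rw [duffin_parts c hsym h (fun x => g x - h x)]
      have : ∑ x, (g x - h x) * F x = 0 := by
        apply Finset.sum_eq_zero
        intro x _
        by_cases hxS : x ∈ S
        · rw [hg0 x hxS, hS0 x hxS]; ring
        by_cases hxT : x ∈ T
        · rw [hg1 x hxT, hT1 x hxT]; ring
        · have hFx : F x = 0 := hharm x hxS hxT
          rw [hFx]; ring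
      rw [this]; ring
    have expand : ∑ x, ∑ y, c x y * (g y - g x)^2
        = ∑ x, ∑ y, c x y * (h y - h x)^2
          + 2 * (∑ x, ∑ y, c x y * (h y - h x) * ((g y - h y) - (g x - h x)))
          + ∑ x, ∑ y, c x y * ((g y - h y) - (g x - h x))^2 := by
      rw [Finset.mul_sum, ← Finset.sum_add_distrib, ← Finset.sum_add_distrib]
      refine Finset.sum_congr rfl fun x _ => ?_
      rw [Finset.mul_sum, ← Finset.sum_add_distrib, ← Finset.sum_add_distrib]
      exact Finset.sum_congr rfl fun y _ => by ring
    have nonneg : 0 ≤ ∑ x, ∑ y, c x y * ((g y - h y) - (g x - h x))^2 :=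
      Finset.sum_nonneg fun x _ => Finset.sum_nonneg fun y _ =>
        mul_nonneg (hnn x y) (sq_nonneg _)
    rw [expand, cross, energy_h]
    linarith
  -- Step C: there is an edge where h differs, hence I > 0
  obtain ⟨s₀, hs₀⟩ := hS
  obtain ⟨t₀, ht₀⟩ := hT
  obtain ⟨m₀, γ₀, hγ₀0, hγ₀l, hγ₀e⟩ := duffin_exists_path c s₀ t₀ (hconn s₀ t₀)
  have hedge : ∃ x y, 0 < c x y ∧ h y - h x ≠ 0 := by
    by_contra hcon
    push_neg at hcon
    have : ∑ i : Fin m₀, (h (γ₀ i.succ) - h (γ₀ i.castSucc)) = 0 :=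
      Finset.sum_eq_zero fun i _ => hcon _ _ (hγ₀e i)
    rw [duffin_telescope m₀ (fun i => h (γ₀ i))] at this
    rw [hγ₀l, hγ₀0, hT1 t₀ ht₀, hS0 s₀ hs₀] at this
    norm_num at this
  obtain ⟨x₀, y₀, hcx₀, hhx₀⟩ := hedge
  have Ipos : 0 < I := by
    have pos : 0 < ∑ x, ∑ y, c x y * (h y - h x)^2 := by
      apply Finset.sum_pos'
      · intro x _
        exact Finset.sum_nonneg fun y _ => mul_nonneg (hnn x y) (sq_nonneg _)
      · refine ⟨x₀, Finset.mem_univ _, Finset.sum_pos' (fun y _ =>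
          mul_nonneg (hnn x₀ y) (sq_nonneg _)) ⟨y₀, Finset.mem_univ _, ?_⟩⟩
        apply mul_pos hcx₀
        rw [sq]
        exact mul_self_pos.mpr hhx₀
    rw [energy_h] at pos
    linarith
  -- Upper bound: every element of the set is ≤ 1/I
  have hub : ∀ q ∈ {q : ℝ | ∃ ρ : V → V → ℝ, (∀ x y, ρ x y = ρ y x) ∧ (∀ x y, 0 ≤ ρ x y) ∧
        (∀ x y, c x y = 0 → ρ x y = 0) ∧ ρ ≠ 0 ∧
        q = (sInf {l : ℝ | ∃ (m : ℕ) (γ : Fin (m+1) → V), γ 0 ∈ S ∧ γ (Fin.last m) ∈ T ∧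
              (∀ i : Fin m, 0 < c (γ i.castSucc) (γ i.succ)) ∧
              l = ∑ i : Fin m, ρ (γ i.castSucc) (γ i.succ)}) ^ 2
            / ((1/2) * ∑ x, ∑ y, c x y * ρ x y ^ 2)}, q ≤ 1 / I := by
    rintro q ⟨ρ, hρsym, hρnn, hρvan, hρne, rfl⟩
    set L : Set ℝ := {l : ℝ | ∃ (m : ℕ) (γ : Fin (m+1) → V), γ 0 ∈ S ∧ γ (Fin.last m) ∈ T ∧
              (∀ i : Fin m, 0 < c (γ i.castSucc) (γ i.succ)) ∧
              l = ∑ i : Fin m, ρ (γ i.castSucc) (γ i.succ)} with hL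
    set A : ℝ := (1/2) * ∑ x, ∑ y, c x y * ρ x y ^ 2 with hA
    have hLlb : ∀ l ∈ L, (0:ℝ) ≤ l := by
      rintro l ⟨m, γ, _, _, _, rfl⟩
      exact Finset.sum_nonneg fun i _ => hρnn _ _
    have hLbdd : BddBelow L := ⟨0, hLlb⟩
    have hLne : L.Nonempty := by
      obtain ⟨m, γ, h0, hl, he⟩ := duffin_exists_path c s₀ t₀ (hconn s₀ t₀)
      exact ⟨_, m, γ, h0 ▸ hs₀, hl ▸ ht₀, he, rfl⟩
    have hℓnn : 0 ≤ sInf L := le_csInf hLne hLlb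
    have hAnn : 0 ≤ A := by
      rw [hA]
      apply mul_nonneg (by norm_num)
      exact Finset.sum_nonneg fun x _ => Finset.sum_nonneg fun y _ =>
        mul_nonneg (hnn x y) (sq_nonneg _)
    rcases eq_or_lt_of_le hAnn with hA0 | hApos
    · rw [← hA0, div_zero]
      positivity
    rcases eq_or_lt_of_le hℓnn with hℓ0 | hℓpos
    · rw [← hℓ0]
      simp only [ne_eq, OfNat.ofNat_ne_zero, not_false_eq_true, zero_pow, zero_div]
      positivity
    -- distance function
    set P : V → Set ℝ := fun x => {l : ℝ | ∃ (m : ℕ) (γ : Fin (m+1) → V), γ 0 ∈ S ∧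
        γ (Fin.last m) = x ∧ (∀ i : Fin m, 0 < c (γ i.castSucc) (γ i.succ)) ∧
        l = ∑ i : Fin m, ρ (γ i.castSucc) (γ i.succ)} with hP
    have hPlb : ∀ x, ∀ l ∈ P x, (0:ℝ) ≤ l := by
      rintro x l ⟨m, γ, _, _, _, rfl⟩
      exact Finset.sum_nonneg fun i _ => hρnn _ _
    have hPbdd : ∀ x, BddBelow (P x) := fun x => ⟨0, hPlb x⟩
    have hPne : ∀ x, (P x).Nonempty := by
      intro x
      obtain ⟨m, γ, h0, hl, he⟩ := duffin_exists_path c s₀ x (hconn s₀ x)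
      exact ⟨_, m, γ, h0 ▸ hs₀, hl, he, rfl⟩
    set d : V → ℝ := fun x => sInf (P x) with hd
    have hdnn : ∀ x, 0 ≤ d x := fun x => le_csInf (hPne x) (hPlb x)
    have hd0 : ∀ s ∈ S, d s = 0 := by
      intro s hs
      refine le_antisymm (csInf_le (hPbdd s) ?_) (hdnn s)
      exact ⟨0, fun _ => s, hs, rfl, fun i => i.elim0, by simp⟩
    have hdT : ∀ t ∈ T, sInf L ≤ d t := by
      intro t ht
      refine le_csInf (hPne t) ?_
      rintro l ⟨m, γ, h0, hl, he, rfl⟩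
      exact csInf_le hLbdd ⟨m, γ, h0, hl ▸ ht, he, rfl⟩
    have htri : ∀ x y, 0 < c x y → d y ≤ d x + ρ x y := by
      intro x y hcxy
      have step : ∀ l ∈ P x, d y ≤ l + ρ x y := by
        rintro l ⟨m, γ, h0, hl, he, rfl⟩
        apply csInf_le (hPbdd y)
        refine ⟨m+1, Fin.snoc γ y, ?_, ?_, ?_, ?_⟩
        · rw [show (0 : Fin (m+2)) = Fin.castSucc 0 by rfl, Fin.snoc_castSucc]; exact h0
        · rw [Fin.snoc_last]
        · exact duffin_snoc_edges c m γ y _ rfl he (hl ▸ hcxy)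
        · rw [duffin_snoc_sum m γ y ρ _ rfl, hl]
      have : d y - ρ x y ≤ d x := le_csInf (hPne x) fun l hl => by linarith [step l hl]
      linarith
    -- test function
    set g : V → ℝ := fun x => min 1 (d x / sInf L) with hg
    have hg0 : ∀ s ∈ S, g s = 0 := by
      intro s hs
      simp [hg, hd0 s hs]
    have hg1 : ∀ t ∈ T, g t = 1 := by
      intro t ht
      have : 1 ≤ d t / sInf L := (one_le_div hℓpos).mpr (hdT t ht)
      simp [hg, min_eq_left this]
    have hedgeb : ∀ x y, 0 < c x y → (g y - g x)^2 ≤ (ρ x y / sInf L)^2 := by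
      intro x y hcxy
      have h1 : |g y - g x| ≤ |d y / sInf L - d x / sInf L| := duffin_min_lip _ _
      have habs : |d y - d x| ≤ ρ x y := by
        apply abs_le.mpr
        constructor
        · have := htri y x (by rw [hsym]; exact hcxy)
          rw [hρsym y x] at this
          linarith
        · linarith [htri x y hcxy]
      have h2 : |d y / sInf L - d x / sInf L| ≤ ρ x y / sInf L := by
        rw [div_sub_div_same, abs_div, abs_of_pos hℓpos]
        exact (div_le_div_iff_of_pos_right hℓpos).mpr habs
      have h3 : |g y - g x| ≤ ρ x y / sInf L := h1.trans h2
      calc (g y - g x)^2 = |g y - g x|^2 := (sq_abs _).symm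
        _ ≤ (ρ x y / sInf L)^2 := by
            apply pow_le_pow_left₀ (abs_nonneg _) h3
    have comp : ∑ x, ∑ y, c x y * (g y - g x)^2
        ≤ ∑ x, ∑ y, c x y * (ρ x y / sInf L)^2 := by
      apply Finset.sum_le_sum
      intro x _
      apply Finset.sum_le_sum
      intro y _
      rcases eq_or_lt_of_le (hnn x y) with hc0 | hcpos
      · rw [← hc0]; ring_nf; exact le_refl 0
      · exact mul_le_mul_of_nonneg_left (hedgeb x y hcpos) (hnn x y)
    have rhs_eq : ∑ x, ∑ y, c x y * (ρ x y / sInf L)^2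
        = (∑ x, ∑ y, c x y * ρ x y ^ 2) / (sInf L)^2 := by
      rw [Finset.sum_div]
      refine Finset.sum_congr rfl fun x _ => ?_
      rw [Finset.sum_div]
      refine Finset.sum_congr rfl fun y _ => ?_
      rw [div_pow, mul_div_assoc]
    have main : 2 * I ≤ (2 * A) / (sInf L)^2 := by
      have := (dirichlet g hg0 hg1).trans (comp.trans_eq rhs_eq)
      rw [hA]
      calc 2 * I ≤ (∑ x, ∑ y, c x y * ρ x y ^ 2) / (sInf L)^2 := this
        _ = 2 * (1/2 * ∑ x, ∑ y, c x y * ρ x y ^ 2) / (sInf L)^2 := by ring_nf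
    have key : I * (sInf L)^2 ≤ A := by
      have hsq : (0:ℝ) < (sInf L)^2 := by positivity
      have := (le_div_iff₀ hsq).mp main
      linarith
    rw [div_le_div_iff₀ hApos Ipos]
    linarith
  -- Membership: the witness ρ* achieves 1/I
  set ρs : V → V → ℝ := fun x y => if c x y = 0 then 0 else |h y - h x| with hρs
  have hρssym : ∀ x y, ρs x y = ρs y x := by
    intro x y
    simp only [hρs, hsym x y, abs_sub_comm (h y) (h x)]
  have hρsnn : ∀ x y, 0 ≤ ρs x y := by
    intro x y
    simp only [hρs]
    split <;> [rfl; exact abs_nonneg _]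
  have hρsvan : ∀ x y, c x y = 0 → ρs x y = 0 := by
    intro x y hc
    simp [hρs, hc]
  have hρsne : ρs ≠ 0 := by
    intro hz
    have := congrFun (congrFun hz x₀) y₀
    simp only [hρs, Pi.zero_apply] at this
    rw [if_neg (ne_of_gt hcx₀)] at this
    exact hhx₀ (abs_eq_zero.mp this)
  have hAs : (1/2) * ∑ x, ∑ y, c x y * ρs x y ^ 2 = I := by
    have : ∑ x, ∑ y, c x y * ρs x y ^ 2 = ∑ x, ∑ y, c x y * (h y - h x)^2 := by
      refine Finset.sum_congr rfl fun x _ => Finset.sum_congr rfl fun y _ => ?_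
      by_cases hc : c x y = 0
      · simp [hc]
      · rw [hρs]; simp only [if_neg hc, sq_abs]
    rw [this, energy_h]; ring
  set Ls : Set ℝ := {l : ℝ | ∃ (m : ℕ) (γ : Fin (m+1) → V), γ 0 ∈ S ∧ γ (Fin.last m) ∈ T ∧
              (∀ i : Fin m, 0 < c (γ i.castSucc) (γ i.succ)) ∧
              l = ∑ i : Fin m, ρs (γ i.castSucc) (γ i.succ)} with hLs
  have hLsne : Ls.Nonempty := ⟨_, m₀, γ₀, hγ₀0 ▸ hs₀, hγ₀l ▸ ht₀, hγ₀e, rfl⟩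
  have hLsge : ∀ l ∈ Ls, (1:ℝ) ≤ l := by
    rintro l ⟨m, γ, h0, hl, he, rfl⟩
    have tele : ∑ i : Fin m, (h (γ i.succ) - h (γ i.castSucc)) = 1 := by
      rw [duffin_telescope m (fun i => h (γ i)), hT1 _ hl, hS0 _ h0]
      norm_num
    calc (1:ℝ) = ∑ i : Fin m, (h (γ i.succ) - h (γ i.castSucc)) := tele.symm
      _ ≤ ∑ i : Fin m, ρs (γ i.castSucc) (γ i.succ) := by
          apply Finset.sum_le_sum
          intro i _
          rw [hρs]
          simp only [if_neg (ne_of_gt (he i))]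
          exact le_abs_self _
  have hℓs1 : 1 ≤ sInf Ls := le_csInf hLsne hLsge
  have hmem : (1:ℝ) / I ∈ {q : ℝ | ∃ ρ : V → V → ℝ, (∀ x y, ρ x y = ρ y x) ∧
        (∀ x y, 0 ≤ ρ x y) ∧
        (∀ x y, c x y = 0 → ρ x y = 0) ∧ ρ ≠ 0 ∧
        q = (sInf {l : ℝ | ∃ (m : ℕ) (γ : Fin (m+1) → V), γ 0 ∈ S ∧ γ (Fin.last m) ∈ T ∧
              (∀ i : Fin m, 0 < c (γ i.castSucc) (γ i.succ)) ∧
              l = ∑ i : Fin m, ρ (γ i.castSucc) (γ i.succ)}) ^ 2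
            / ((1/2) * ∑ x, ∑ y, c x y * ρ x y ^ 2)} := by
    have hmem' : (sInf Ls)^2 / ((1/2) * ∑ x, ∑ y, c x y * ρs x y ^ 2) ∈
        {q : ℝ | ∃ ρ : V → V → ℝ, (∀ x y, ρ x y = ρ y x) ∧ (∀ x y, 0 ≤ ρ x y) ∧
        (∀ x y, c x y = 0 → ρ x y = 0) ∧ ρ ≠ 0 ∧
        q = (sInf {l : ℝ | ∃ (m : ℕ) (γ : Fin (m+1) → V), γ 0 ∈ S ∧ γ (Fin.last m) ∈ T ∧
              (∀ i : Fin m, 0 < c (γ i.castSucc) (γ i.succ)) ∧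
              l = ∑ i : Fin m, ρ (γ i.castSucc) (γ i.succ)}) ^ 2
            / ((1/2) * ∑ x, ∑ y, c x y * ρ x y ^ 2)} :=
      ⟨ρs, hρssym, hρsnn, hρsvan, hρsne, rfl⟩
    have hle := hub _ hmem'
    rw [hAs] at hle hmem'
    have hsq : (sInf Ls)^2 ≤ 1 := by
      have := (div_le_div_iff₀ Ipos Ipos).mp hle
      nlinarith
    have hℓeq : sInf Ls = 1 := by nlinarith
    rw [hℓeq] at hmem'
    simpa using hmem'
  exact IsGreatest.csSup_eq ⟨hmem, hub⟩
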